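/- Let R be a commutative ring equipped with a pre-lambda structure λ. Then every formal power series A(t) ∈ R[[t]] with constant coefficient 1 admits a unique Euler product decomposition: there exists a unique sequence (b_k)_{k≥1} of elements of R such that A(t) = ∏_{k≥1} λ(b_k)(t^k), i.e. for every N ≥ 1 one has A(t) ≡ ∏_{k=1}^{N} λ(b_k)(t^k) modulo t^{N+1}. -/

import Mathlib

open PowerSeries

/-- A pre-lambda structure on a commutative ring `R`: a map `λ` assigning to each `m ∈ R`
a formal power series with constant coefficient `1` and coefficient of `t` equal to `m`,
such that `λ(m+n) = λ(m)·λ(n)`. -/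
structure PreLambda (R : Type*) [CommRing R] where
  toFun : R → PowerSeries R
  constantCoeff_toFun : ∀ m, PowerSeries.constantCoeff (toFun m) = 1
  coeff_one_toFun : ∀ m, PowerSeries.coeff 1 (toFun m) = m
  toFun_add : ∀ m n, toFun (m + n) = toFun m * toFun n

variable {R : Type*} [CommRing R]

/-- Substitution of `t^k` for `t` in a formal power series (intended for `k ≥ 1`). -/
noncomputable def substPow (k : ℕ) (f : PowerSeries R) : PowerSeries R :=
  PowerSeries.mk fun n => if k ∣ n then PowerSeries.coeff (n / k) f else 0

lemma coeff_substPow (k n : ℕ) (f : PowerSeries R) :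
    PowerSeries.coeff n (substPow k f) =
      if k ∣ n then PowerSeries.coeff (n / k) f else 0 := by
  simp [substPow]

lemma constantCoeff_substPow (k : ℕ) (Λ : PreLambda R) (c : R) :
    PowerSeries.constantCoeff (substPow k (Λ.toFun c)) = 1 := by
  rw [← PowerSeries.coeff_zero_eq_constantCoeff, coeff_substPow]
  simp [Λ.constantCoeff_toFun]

lemma coeff_mul_substPow (m n : ℕ) (hn : n ≤ m + 1) (f : PowerSeries R) (c : R)
    (Λ : PreLambda R) :
    PowerSeries.coeff n (f * substPow (m + 1) (Λ.toFun c)) =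
      PowerSeries.coeff n f +
        (if n = m + 1 then PowerSeries.constantCoeff f * c else 0) := by
  rw [PowerSeries.coeff_mul, Finset.Nat.sum_antidiagonal_eq_sum_range_succ
    (fun i j => PowerSeries.coeff i f * PowerSeries.coeff j (substPow (m+1) (Λ.toFun c))) n]
  have key : ∀ k ∈ Finset.range (n + 1),
      PowerSeries.coeff k f * PowerSeries.coeff (n - k) (substPow (m+1) (Λ.toFun c)) =
      (if k = n then PowerSeries.coeff n f else 0) +
      (if k = 0 ∧ n = m + 1 then PowerSeries.constantCoeff f * c else 0) := by
    intro k hk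
    rw [Finset.mem_range] at hk
    rw [coeff_substPow]
    rcases eq_or_ne k n with rfl | hkn
    · rcases eq_or_ne k 0 with rfl | hn0
      · have : ¬ (0 = m + 1) := by omega
        simp [Λ.constantCoeff_toFun, this]
      · simp [hn0, Nat.sub_self, Λ.constantCoeff_toFun, Ne.symm hn0]
    · have hnk : 1 ≤ n - k := by omega
      have hnk2 : n - k ≤ m + 1 := by omega
      rcases eq_or_ne (n - k) (m + 1) with he | he
      · have hk0 : k = 0 := by omega
        have hne : n = m + 1 := by omega
        subst hk0
        simp [hne, Nat.dvd_refl, Λ.coeff_one_toFun, hkn, PowerSeries.coeff_zero_eq_constantCoeff]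
      · have hdvd : ¬ (m + 1) ∣ (n - k) := by
          intro h
          have := Nat.le_of_dvd (by omega) h
          omega
        have hcond : ¬ (k = 0 ∧ n = m + 1) := by
          rintro ⟨rfl, rfl⟩
          omega
        simp [hdvd, hkn, hcond]
  rw [Finset.sum_congr rfl key, Finset.sum_add_distrib]
  congr 1
  · rw [Finset.sum_ite_eq' (Finset.range (n+1)) n]
    simp
  · by_cases h : n = m + 1
    · simp [h]
    · simp [h]

noncomputable def partialProd (Λ : PreLambda R) (A : PowerSeries R) : ℕ → PowerSeries R
  | 0 => 1
  | m + 1 => partialProd Λ A m * substPow (m + 1)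
      (Λ.toFun (PowerSeries.coeff (m+1) A - PowerSeries.coeff (m+1) (partialProd Λ A m)))

lemma constantCoeff_partialProd (Λ : PreLambda R) (A : PowerSeries R) (m : ℕ) :
    PowerSeries.constantCoeff (partialProd Λ A m) = 1 := by
  induction m with
  | zero => simp [partialProd]
  | succ m ih => simp [partialProd, ih, constantCoeff_substPow]

lemma coeff_partialProd (Λ : PreLambda R) (A : PowerSeries R) :
    ∀ m n, n ≤ m → PowerSeries.coeff n (partialProd Λ A m) =
      if n = 0 then 1 else PowerSeries.coeff n A := by
  intro m
  induction m with
  | zero => intro n hn; interval_cases n; simp [partialProd]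
  | succ m ih =>
    intro n hn
    rw [partialProd, coeff_mul_substPow m n hn]
    rcases eq_or_ne n (m + 1) with rfl | hne
    · rw [constantCoeff_partialProd]
      rcases Nat.eq_zero_or_pos m with rfl | hm
      · simp [partialProd]
      · have : PowerSeries.coeff (m+1) (partialProd Λ A m) +
            1 * (PowerSeries.coeff (m+1) A - PowerSeries.coeff (m+1) (partialProd Λ A m)) =
            PowerSeries.coeff (m+1) A := by ring
        rw [if_pos rfl, this, if_neg (by omega)]
    · rw [if_neg hne, add_zero, ih n (by omega)]

lemma constantCoeff_prod (Λ : PreLambda R) (b : ℕ → R) (N : ℕ) :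
    PowerSeries.constantCoeff
      (∏ k ∈ Finset.range N, substPow (k + 1) (Λ.toFun (b k))) = 1 := by
  rw [map_prod]
  apply Finset.prod_eq_one
  intro k _
  exact constantCoeff_substPow _ _ _

lemma prod_eq_partialProd (Λ : PreLambda R) (A : PowerSeries R) (N : ℕ) :
    (∏ k ∈ Finset.range N, substPow (k + 1)
      (Λ.toFun (PowerSeries.coeff (k+1) A - PowerSeries.coeff (k+1) (partialProd Λ A k)))) =
      partialProd Λ A N := by
  induction N with
  | zero => simp [partialProd]
  | succ N ih => rw [Finset.prod_range_succ, ih, partialProd]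

/-- **Euler product decomposition.** Every formal power series `A(t)` with constant
coefficient `1` over a commutative ring with a pre-lambda structure `λ` admits a unique
Euler product decomposition: there is a unique sequence `(b_k)_{k≥1}` (here `b k` denotes
`b_{k+1}`) such that for every `N ≥ 1` one has
`A(t) ≡ ∏_{k=1}^{N} λ(b_k)(t^k)` modulo `t^{N+1}`. -/
theorem eulerProduct_existsUnique (Λ : PreLambda R) (A : PowerSeries R)
    (hA : PowerSeries.constantCoeff A = 1) :
    ∃! b : ℕ → R, ∀ N : ℕ, 1 ≤ N → ∀ n ≤ N,
      PowerSeries.coeff n A =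
        PowerSeries.coeff n
          (∏ k ∈ Finset.range N, substPow (k + 1) (Λ.toFun (b k))) := by
  set b : ℕ → R := fun m =>
    PowerSeries.coeff (m+1) A - PowerSeries.coeff (m+1) (partialProd Λ A m) with hb
  refine ⟨b, ?_, ?_⟩
  · intro N hN n hn
    rw [prod_eq_partialProd, coeff_partialProd Λ A N n hn]
    rcases eq_or_ne n 0 with rfl | hn0
    · rw [PowerSeries.coeff_zero_eq_constantCoeff, hA]
      simp
    · rw [if_neg hn0]
  · intro y hy
    funext m
    induction m using Nat.strong_induction_on with
    | _ m ih =>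
      have hprod : ∀ M ≤ m, (∏ k ∈ Finset.range M, substPow (k + 1) (Λ.toFun (y k))) =
          ∏ k ∈ Finset.range M, substPow (k + 1) (Λ.toFun (b k)) := by
        intro M hM
        apply Finset.prod_congr rfl
        intro k hk
        rw [Finset.mem_range] at hk
        rw [ih k (by omega)]
      have h1 := hy (m+1) (by omega) (m+1) le_rfl
      have h2 : PowerSeries.coeff (m+1) A = PowerSeries.coeff (m+1)
          (∏ k ∈ Finset.range (m+1), substPow (k + 1) (Λ.toFun (b k))) := by
        rw [prod_eq_partialProd, coeff_partialProd Λ A (m+1) (m+1) le_rfl, if_neg (by omega)]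
      rw [Finset.prod_range_succ, coeff_mul_substPow m (m+1) le_rfl, if_pos rfl,
        constantCoeff_prod, one_mul, hprod m le_rfl] at h1
      rw [Finset.prod_range_succ, coeff_mul_substPow m (m+1) le_rfl, if_pos rfl,
        constantCoeff_prod, one_mul] at h2
      have := h1.symm.trans h2
      exact add_left_cancel this
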